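/- Let q, r be natural numbers, a : Fin (q+1) → (Fin r → ℤ), and let the torus T = (Fin r → ℂˣ) act on ℂ^{q+1} by (t • z) j = (∏ i, (t i : ℂ) ^ (−(a j i))) * z j. Let v ∈ ℂ^{q+1} and suppose the squared-norm function attains its minimum over the orbit at v, i.e., for every t ∈ T one has ∑ j, ‖(t • v) j‖² ≥ ∑ j, ‖v j‖². Then ∑ j, ‖v j‖² * (a j i) = 0 for every i ∈ Fin r; in particular, if v ≠ 0 then μ(v) = 0 where μ(z) i = (∑ j, ‖z j‖² * (a j i)) / (∑ j, ‖z j‖²). -/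

import Mathlib

/-- **A minimal vector of a torus orbit has vanishing moment map value.**

If the squared norm attains its minimum over the `T`-orbit of `v` at `v`
itself, then `∑ j, ‖v j‖² * a j i = 0` for every `i`; in particular, if
`v ≠ 0` then `μ(v) = 0` for the moment map
`μ z i = (∑ j, ‖z j‖² * a j i) / (∑ j, ‖z j‖²)`. -/
theorem momentMap_eq_zero_of_min_norm (q r : ℕ) (a : Fin (q + 1) → Fin r → ℤ)
    (v : Fin (q + 1) → ℂ)
    (hmin : ∀ t : Fin r → ℂˣ,
      (∑ j, ‖v j‖ ^ 2) ≤ ∑ j, ‖(∏ i, (t i : ℂ) ^ (-(a j i))) * v j‖ ^ 2) :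
    (∀ i : Fin r, (∑ j, ‖v j‖ ^ 2 * (a j i : ℝ)) = 0) ∧
      (v ≠ 0 → ∀ i : Fin r,
        (∑ j, ‖v j‖ ^ 2 * (a j i : ℝ)) / (∑ j, ‖v j‖ ^ 2) = 0) := by
  have key : ∀ i : Fin r, (∑ j, ‖v j‖ ^ 2 * (a j i : ℝ)) = 0 := by
    intro i
    set g : ℝ → ℝ := fun x => ∑ j, ‖v j‖ ^ 2 * Real.exp (((-2 * a j i : ℤ) : ℝ) * x)
      with hg
    have hg0 : g 0 = ∑ j, ‖v j‖ ^ 2 := by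
      simp [hg]
    have hmin0 : ∀ x : ℝ, g 0 ≤ g x := by
      intro x
      have hne : ((Real.exp x : ℂ)) ≠ 0 := by
        simp [Real.exp_ne_zero]
      set t : Fin r → ℂˣ := fun k =>
        if k = i then Units.mk0 (Real.exp x : ℂ) hne else 1 with ht
      have h := hmin t
      have hterm : ∀ j, ‖(∏ k, (t k : ℂ) ^ (-(a j k))) * v j‖ ^ 2
          = ‖v j‖ ^ 2 * Real.exp (((-2 * a j i : ℤ) : ℝ) * x) := by
        intro j
        have hprod : (∏ k, (t k : ℂ) ^ (-(a j k)))
            = (Real.exp x : ℂ) ^ (-(a j i)) := by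
          rw [Finset.prod_eq_single i]
          · simp [ht]
          · intro k _ hk; simp [ht, hk]
          · simp
        rw [hprod, norm_mul, mul_pow]
        have hnorm : ‖(Real.exp x : ℂ) ^ (-(a j i))‖ = Real.exp x ^ (-(a j i)) := by
          rw [norm_zpow, Complex.norm_real, Real.norm_eq_abs,
            abs_of_pos (Real.exp_pos x)]
        rw [hnorm]
        have : (Real.exp x ^ (-(a j i))) ^ 2 = Real.exp (((-2 * a j i : ℤ) : ℝ) * x) := by
          rw [← Real.rpow_intCast (Real.exp x) (-(a j i)), ← Real.exp_mul,
            ← zpow_natCast _ 2, ← Real.rpow_intCast, ← Real.exp_mul]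
          push_cast
          ring_nf
        rw [this]; ring
      calc g 0 = ∑ j, ‖v j‖ ^ 2 := hg0
        _ ≤ ∑ j, ‖(∏ k, (t k : ℂ) ^ (-(a j k))) * v j‖ ^ 2 := h
        _ = g x := by rw [hg]; exact Finset.sum_congr rfl fun j _ => hterm j
    have hloc : IsLocalMin g 0 := Filter.Eventually.of_forall hmin0
    have hd : HasDerivAt g (∑ j, ‖v j‖ ^ 2 * ((-2 * a j i : ℤ) : ℝ)) 0 := by
      have : HasDerivAt g
          (∑ j, ‖v j‖ ^ 2 * (Real.exp (((-2 * a j i : ℤ) : ℝ) * 0) * ((-2 * a j i : ℤ) : ℝ))) 0 := by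
        apply HasDerivAt.fun_sum
        intro j _
        have := ((((hasDerivAt_id (0:ℝ)).const_mul (((-2 * a j i : ℤ) : ℝ))).exp).const_mul
          (‖v j‖ ^ 2))
        convert this using 1
        · rfl
        · rfl
        simp [mul_comm]
      simpa using this
    have hdz : (∑ j, ‖v j‖ ^ 2 * ((-2 * a j i : ℤ) : ℝ)) = 0 := by
      rw [← hd.deriv]
      exact hloc.deriv_eq_zero
    have : (-2 : ℝ) * ∑ j, ‖v j‖ ^ 2 * (a j i : ℝ) = 0 := by
      rw [Finset.mul_sum]
      rw [← hdz]
      refine Finset.sum_congr rfl fun j _ => ?_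
      push_cast
      ring
    linarith
  refine ⟨key, fun _ i => by rw [key i]; simp⟩
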